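/- Let α ∈ (0,1), γ ∈ [0,1), let d : S → ℝ be a probability distribution with d(s) > 0 for all s, D the diagonal matrix of d, P an n×n row-stochastic nonnegative matrix, A = I + α(γ D P − D), and ρ = 1 − α·d_min·(1−γ) with d_min = min_s d(س). Let W_max = 9/(1−γ)², let (W_k) be symmetric positive semidefinite n×n matrices with λ_max(W_k) ≤ W_max for all k, let X_0 be symmetric positive semidefinite, and define X_{k+1} = A X_k A^T + α² W_k. Then for all k ≥ 0, λ_max(X_k) ≤ α² W_max n/(1−ρ) + n λ_max(X_0) ρ^{2k}. -/

import Mathlib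

open Finset Matrix

/-- The largest eigenvalue of a real matrix: the supremum of the set of its real
eigenvalues.  For a real symmetric matrix this is the usual `λ_max`. -/
noncomputable def lamMax {S : Type*} [Fintype S] (M : Matrix S S ℝ) : ℝ :=
  sSup {μ : ℝ | ∃ v : S → ℝ, v ≠ 0 ∧ M.mulVec v = μ • v}

section helpers
set_option linter.unusedSectionVars false
variable {S : Type*} [Fintype S] [DecidableEq S]

lemma eig_abs_le (M : Matrix S S ℝ) (c : ℝ)
    (h : ∀ i, ∑ j, |M i j| ≤ c) {μ : ℝ} {v : S → ℝ} (hv : v ≠ 0)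
    (heq : M.mulVec v = μ • v) : |μ| ≤ c := by
  have hne : (Finset.univ : Finset S).Nonempty := by
    obtain ⟨j, hj⟩ := Function.ne_iff.mp hv
    exact ⟨j, Finset.mem_univ j⟩
  obtain ⟨i, -, hi⟩ := Finset.exists_max_image Finset.univ (fun j => |v j|) hne
  have hvi : 0 < |v i| := by
    obtain ⟨j, hj⟩ := Function.ne_iff.mp hv
    exact lt_of_lt_of_le (abs_pos.mpr hj) (hi j (Finset.mem_univ j))
  have key : |μ| * |v i| ≤ c * |v i| := by
    have h1 : (M.mulVec v) i = μ * v i := by rw [heq]; rfl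
    have h2 : |μ * v i| = |∑ j, M i j * v j| := by rw [← h1]; rfl
    calc |μ| * |v i| = |μ * v i| := (abs_mul μ (v i)).symm
      _ = |∑ j, M i j * v j| := h2
      _ ≤ ∑ j, |M i j * v j| := Finset.abs_sum_le_sum_abs _ _
      _ ≤ ∑ j, |M i j| * |v i| := by
          refine Finset.sum_le_sum fun j _ => ?_
          rw [abs_mul]
          exact mul_le_mul_of_nonneg_left (hi j (Finset.mem_univ j)) (abs_nonneg _)
      _ = (∑ j, |M i j|) * |v i| := by rw [Finset.sum_mul]
      _ ≤ c * |v i| := mul_le_mul_of_nonneg_right (h i) (abs_nonneg _)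
  exact le_of_mul_le_mul_right key hvi

lemma spec_bddAbove (M : Matrix S S ℝ) :
    BddAbove {μ : ℝ | ∃ v : S → ℝ, v ≠ 0 ∧ M.mulVec v = μ • v} := by
  refine ⟨∑ i, ∑ j, |M i j|, fun μ hμ => ?_⟩
  obtain ⟨v, hv, heq⟩ := hμ
  refine le_trans (le_abs_self μ) (eig_abs_le M _ (fun i => ?_) hv heq)
  exact Finset.single_le_sum (f := fun i => ∑ j, |M i j|)
    (fun i _ => Finset.sum_nonneg fun j _ => abs_nonneg _) (Finset.mem_univ i)

lemma lamMax_le_of_abs_entries (M : Matrix S S ℝ) (c : ℝ) (hc : 0 ≤ c)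
    (h : ∀ i j, |M i j| ≤ c) :
    lamMax M ≤ (Fintype.card S : ℝ) * c := by
  refine Real.sSup_le (fun μ hμ => ?_) (by positivity)
  obtain ⟨v, hv, heq⟩ := hμ
  refine le_trans (le_abs_self μ) (eig_abs_le M _ (fun i => ?_) hv heq)
  calc ∑ j, |M i j| ≤ ∑ _j : S, c := Finset.sum_le_sum fun j _ => h i j
    _ = (Fintype.card S : ℝ) * c := by simp [Finset.sum_const, nsmul_eq_mul]

lemma eigenvalue_le_lamMax {M : Matrix S S ℝ} (hM : M.IsHermitian) (k : S) :
    hM.eigenvalues k ≤ lamMax M := by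
  refine le_csSup (spec_bddAbove M) ?_
  refine ⟨⇑(hM.eigenvectorBasis k), ?_, hM.mulVec_eigenvectorBasis k⟩
  intro h
  refine hM.eigenvectorBasis.orthonormal.ne_zero k ?_
  ext j
  exact congrFun h j

lemma diag_le_lamMax [Nonempty S] {M : Matrix S S ℝ} (hM : M.IsHermitian) (i : S) :
    M i i ≤ lamMax M := by
  set U : Matrix S S ℝ := (Matrix.IsHermitian.eigenvectorUnitary hM : Matrix S S ℝ) with hU
  have hUU : U * star U = 1 :=
    (Matrix.mem_unitaryGroup_iff).mp (Matrix.IsHermitian.eigenvectorUnitary hM).2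
  have hrow : ∑ k, U i k * U i k = 1 := by
    have := congrFun (congrFun hUU i) i
    simpa [Matrix.mul_apply, Matrix.star_eq_conjTranspose, Matrix.conjTranspose_apply,
      Matrix.one_apply] using this
  have hMi : M i i = ∑ k, hM.eigenvalues k * (U i k * U i k) := by
    conv_lhs => rw [hM.spectral_theorem, Unitary.conjStarAlgAut_apply]
    rw [Matrix.mul_apply]
    simp only [Matrix.mul_diagonal, Matrix.star_eq_conjTranspose, Matrix.conjTranspose_apply,
      star_trivial, Function.comp_apply, RCLike.ofReal_real_eq_id, id_eq]
    exact Finset.sum_congr rfl fun k _ => by rw [hU]; ring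
  rw [hMi]
  calc ∑ k, hM.eigenvalues k * (U i k * U i k)
      ≤ ∑ k, lamMax M * (U i k * U i k) := by
        refine Finset.sum_le_sum fun k _ => ?_
        exact mul_le_mul_of_nonneg_right (eigenvalue_le_lamMax hM k) (mul_self_nonneg _)
    _ = lamMax M := by rw [← Finset.mul_sum, hrow, mul_one]

lemma psd_quad (M : Matrix S S ℝ) (hM : M.PosSemidef) (v : S → ℝ) :
    0 ≤ ∑ i, ∑ j, v i * M i j * v j := by
  have := hM.dotProduct_mulVec_nonneg v
  simpa [dotProduct, Matrix.mulVec, Finset.mul_sum, mul_assoc] using this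

lemma psd_diag_nonneg (M : Matrix S S ℝ) (hM : M.PosSemidef) (i : S) : 0 ≤ M i i := by
  have := psd_quad M hM (fun a => if a = i then 1 else 0)
  simpa [mul_ite, ite_mul, Finset.sum_ite_eq', Finset.sum_ite_eq] using this

lemma sum_single_pair (i j : S) (s : ℝ) (f : S → ℝ) :
    ∑ b, f b * ((if b = i then (1:ℝ) else 0) + s * (if b = j then 1 else 0))
      = f i + s * f j := by
  simp [mul_add, Finset.sum_add_distrib, mul_ite, Finset.sum_ite_eq', mul_comm,
    mul_left_comm]

lemma quad_single (M : Matrix S S ℝ) (i j : S) (s : ℝ) :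
    ∑ a, ∑ b, ((if a = i then (1:ℝ) else 0) + s * (if a = j then 1 else 0)) * M a b *
      ((if b = i then (1:ℝ) else 0) + s * (if b = j then 1 else 0))
      = M i i + s * M i j + s * M j i + s * s * M j j := by
  have h1 : ∀ a, ∑ b, ((if a = i then (1:ℝ) else 0) + s * (if a = j then 1 else 0)) * M a b *
      ((if b = i then (1:ℝ) else 0) + s * (if b = j then 1 else 0))
      = (fun a => M a i + s * M a j) a *
        ((if a = i then (1:ℝ) else 0) + s * (if a = j then 1 else 0)) := by
    intro a
    exact (sum_single_pair i j s
      (fun b => ((if a = i then (1:ℝ) else 0) + s * (if a = j then 1 else 0)) * M a b)).trans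
      (by ring)
  simp only [h1]
  rw [sum_single_pair i j s (fun a => M a i + s * M a j)]
  ring

lemma psd_abs_entry_le [Nonempty S] (M : Matrix S S ℝ) (hM : M.PosSemidef) (i j : S) :
    |M i j| ≤ lamMax M := by
  have hdi := diag_le_lamMax hM.1 i
  have hdj := diag_le_lamMax hM.1 j
  have hp := psd_quad M hM (fun a => (if a = i then (1:ℝ) else 0) + 1 * (if a = j then 1 else 0))
  have hm := psd_quad M hM
    (fun a => (if a = i then (1:ℝ) else 0) + (-1) * (if a = j then 1 else 0))
  rw [quad_single M i j 1] at hp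
  rw [quad_single M i j (-1)] at hm
  have hsym : M j i = M i j := by
    have := congrFun (congrFun hM.1 i) j
    simpa [Matrix.conjTranspose_apply] using this
  rw [abs_le]
  constructor <;> nlinarith

lemma conj_entry_bound (A X : Matrix S S ℝ) (r m : ℝ) (hr0 : 0 ≤ r) (hm : 0 ≤ m)
    (hA0 : ∀ i j, 0 ≤ A i j) (hArow : ∀ i, ∑ j, A i j ≤ r)
    (hX : ∀ i j, |X i j| ≤ m) (i j : S) : |(A * X * Aᵀ) i j| ≤ r * r * m := by
  have hstep : ∀ l, |(A * X) i l| ≤ r * m := by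
    intro l
    calc |(A * X) i l| = |∑ k, A i k * X k l| := by rw [Matrix.mul_apply]
      _ ≤ ∑ k, |A i k * X k l| := Finset.abs_sum_le_sum_abs _ _
      _ ≤ ∑ k, A i k * m := Finset.sum_le_sum fun k _ => by
          rw [abs_mul, abs_of_nonneg (hA0 i k)]
          exact mul_le_mul_of_nonneg_left (hX k l) (hA0 i k)
      _ = (∑ k, A i k) * m := by rw [Finset.sum_mul]
      _ ≤ r * m := mul_le_mul_of_nonneg_right (hArow i) hm
  calc |(A * X * Aᵀ) i j| = |∑ l, (A * X) i l * A j l| := by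
        rw [Matrix.mul_apply]
        simp only [Matrix.transpose_apply]
    _ ≤ ∑ l, |(A * X) i l * A j l| := Finset.abs_sum_le_sum_abs _ _
    _ ≤ ∑ l, (r * m) * A j l := Finset.sum_le_sum fun l _ => by
        rw [abs_mul, abs_of_nonneg (hA0 j l)]
        exact mul_le_mul_of_nonneg_right (hstep l) (hA0 j l)
    _ = (r * m) * ∑ l, A j l := by rw [← Finset.mul_sum]
    _ ≤ (r * m) * r := mul_le_mul_of_nonneg_left (hArow j) (by positivity)
    _ = r * r * m := by ring

end helpers

theorem correlation_iterates_lamMax_bound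
    {S : Type*} [Fintype S] [Nonempty S] [DecidableEq S]
    (γ α : ℝ) (hγ0 : 0 ≤ γ) (hγ1 : γ < 1) (hα0 : 0 < α) (hα1 : α < 1)
    (d : S → ℝ) (hd : ∀ s, 0 < d s) (hd1 : ∑ s, d s = 1)
    (P : Matrix S S ℝ) (hP0 : ∀ i j, 0 ≤ P i j) (hP1 : ∀ i, ∑ j, P i j = 1)
    (A : Matrix S S ℝ)
    (hA : A = 1 + α • (γ • (Matrix.diagonal d * P) - Matrix.diagonal d))
    (ρ : ℝ) (hρ : ρ = 1 - α * (⨅ s : S, d s) * (1 - γ))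
    (Wmax : ℝ) (hWmax : Wmax = 9 / (1 - γ) ^ 2)
    (W : ℕ → Matrix S S ℝ) (hW : ∀ k, (W k).PosSemidef)
    (hWbound : ∀ k, lamMax (W k) ≤ Wmax)
    (X : ℕ → Matrix S S ℝ) (hX0 : (X 0).PosSemidef)
    (hXrec : ∀ k, X (k + 1) = A * X k * Aᵀ + (α ^ 2) • W k) :
    ∀ k, lamMax (X k) ≤
      α ^ 2 * Wmax * (Fintype.card S : ℝ) / (1 - ρ) +
        (Fintype.card S : ℝ) * lamMax (X 0) * ρ ^ (2 * k) := by
  -- basic facts about d and ρ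
  set dmin : ℝ := ⨅ s : S, d s with hdmin_def
  obtain ⟨s0, hs0⟩ := exists_eq_ciInf_of_finite (f := d)
  have hdmin_pos : 0 < dmin := by rw [hdmin_def, ← hs0]; exact hd s0
  have hdmin_le : ∀ s, dmin ≤ d s := fun s =>
    ciInf_le (Set.Finite.bddBelow (Set.finite_range d)) s
  have hd_le_one : ∀ s, d s ≤ 1 := fun s => by
    rw [← hd1]
    exact Finset.single_le_sum (f := d) (fun i _ => (hd i).le) (Finset.mem_univ s)
  have h1γ : 0 < 1 - γ := by linarith
  have h1γle : 1 - γ ≤ 1 := by linarith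
  have hdmin_le_one : dmin ≤ 1 := le_trans (hdmin_le s0) (hd_le_one s0)
  have hρ0 : 0 < ρ := by
    rw [hρ]
    nlinarith [mul_le_mul_of_nonneg_left hdmin_le_one hα0.le,
      mul_le_one₀ hα1.le hdmin_pos.le hdmin_le_one]
  have hρ1 : ρ < 1 := by
    rw [hρ]
    have : 0 < α * dmin * (1 - γ) := by positivity
    linarith
  -- entries of A
  have hA_apply : ∀ i j, A i j =
      (if i = j then (1:ℝ) else 0) + α * (γ * (d i * P i j) - if i = j then d i else 0) := by
    intro i j
    rw [hA]
    simp [Matrix.add_apply, Matrix.smul_apply, Matrix.sub_apply, Matrix.one_apply,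
      Matrix.diagonal_mul, Matrix.diagonal_apply, smul_eq_mul, mul_comm]
  have hA0 : ∀ i j, 0 ≤ A i j := by
    intro i j
    rw [hA_apply]
    by_cases hij : i = j
    · subst hij
      simp only [eq_self_iff_true, if_true]
      have h1 : α * d i < 1 := by nlinarith [hd i, hd_le_one i]
      have h2 : 0 ≤ γ * (d i * P i i) :=
        mul_nonneg hγ0 (mul_nonneg (hd i).le (hP0 i i))
      nlinarith [mul_nonneg hα0.le h2]
    · simp only [if_neg hij]
      have h2 : 0 ≤ α * (γ * (d i * P i j)) :=
        mul_nonneg hα0.le (mul_nonneg hγ0 (mul_nonneg (hd i).le (hP0 i j)))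
      nlinarith
  have hArow : ∀ i, ∑ j, A i j ≤ ρ := by
    intro i
    have hsum : ∑ j, A i j = 1 - α * d i * (1 - γ) := by
      simp only [hA_apply]
      rw [Finset.sum_add_distrib]
      have e1 : ∑ j, (if i = j then (1:ℝ) else 0) = 1 := by
        simp [Finset.sum_ite_eq]
      have e2 : ∑ j, α * (γ * (d i * P i j) - if i = j then d i else 0)
          = α * (γ * d i - d i) := by
        rw [← Finset.mul_sum, Finset.sum_sub_distrib]
        have : ∑ j, γ * (d i * P i j) = γ * d i := by
          rw [← Finset.mul_sum, ← Finset.mul_sum, hP1 i, mul_one]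
        rw [this]
        simp [Finset.sum_ite_eq]
      rw [e1, e2]
      ring
    rw [hsum, hρ]
    have := hdmin_le i
    nlinarith
  -- A real: conjugate transpose is transpose
  have hAT : Aᴴ = Aᵀ := by
    ext a b
    simp [Matrix.conjTranspose_apply]
  -- constants
  have hWmax0 : 0 ≤ Wmax := by rw [hWmax]; positivity
  set C : ℝ := α ^ 2 * Wmax / (1 - ρ ^ 2) with hC_def
  have hρsq : ρ ^ 2 < 1 := by nlinarith
  have h1ρsq : 0 < 1 - ρ ^ 2 := by linarith
  have hC0 : 0 ≤ C := by positivity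
  have hCrec : ρ ^ 2 * C + α ^ 2 * Wmax = C := by
    rw [hC_def]
    field_simp
    ring
  set M0 : ℝ := lamMax (X 0) with hM0_def
  have hM00 : 0 ≤ M0 := le_trans (psd_diag_nonneg _ hX0 s0) (diag_le_lamMax hX0.1 s0)
  -- main induction
  have key : ∀ k, (X k).PosSemidef ∧ ∀ i j, |X k i j| ≤ C + M0 * ρ ^ (2 * k) := by
    intro k
    induction k with
    | zero =>
      refine ⟨hX0, fun i j => ?_⟩
      refine le_trans (psd_abs_entry_le _ hX0 i j) ?_
      have h0 : ρ ^ (2 * 0) = 1 := by norm_num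
      rw [h0]
      linarith
    | succ k ih =>
      obtain ⟨hpsd, hent⟩ := ih
      have hWpsd : ((α ^ 2) • W k).PosSemidef := by
        refine Matrix.PosSemidef.of_dotProduct_mulVec_nonneg ?_ ?_
        · have := (hW k).1
          unfold Matrix.IsHermitian at *
          rw [Matrix.conjTranspose_smul, this]
          simp
        · intro x
          have := (hW k).dotProduct_mulVec_nonneg x
          rw [Matrix.smul_mulVec, dotProduct_smul]
          exact smul_nonneg (by positivity) this
      have hpsd' : (X (k + 1)).PosSemidef := by
        rw [hXrec k]
        have h1 : (A * X k * Aᵀ).PosSemidef := by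
          have := hpsd.mul_mul_conjTranspose_same A
          rwa [hAT] at this
        exact h1.add hWpsd
      refine ⟨hpsd', fun i j => ?_⟩
      have hm : 0 ≤ C + M0 * ρ ^ (2 * k) := by positivity
      have hWe : |W k i j| ≤ Wmax :=
        le_trans (psd_abs_entry_le _ (hW k) i j) (hWbound k)
      have hpowsplit : ρ ^ (2 * (k + 1)) = ρ ^ 2 * ρ ^ (2 * k) := by ring
      rw [hXrec k]
      calc |(A * X k * Aᵀ + (α ^ 2) • W k) i j|
          ≤ |(A * X k * Aᵀ) i j| + |((α ^ 2) • W k) i j| := by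
            rw [Matrix.add_apply]; exact abs_add_le _ _
        _ ≤ ρ * ρ * (C + M0 * ρ ^ (2 * k)) + α ^ 2 * Wmax := by
            refine add_le_add (conj_entry_bound A (X k) ρ _ hρ0.le hm hA0 hArow hent i j) ?_
            rw [Matrix.smul_apply, smul_eq_mul, abs_mul,
              abs_of_nonneg (by positivity : (0:ℝ) ≤ α ^ 2)]
            exact mul_le_mul_of_nonneg_left hWe (by positivity)
        _ = ρ ^ 2 * C + α ^ 2 * Wmax + M0 * (ρ ^ 2 * ρ ^ (2 * k)) := by ring
        _ = C + M0 * ρ ^ (2 * (k + 1)) := by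
            rw [hpowsplit]; linear_combination hCrec
  -- conclusion
  intro k
  obtain ⟨hpsd, hent⟩ := key k
  have hb := lamMax_le_of_abs_entries (X k) _ (by positivity) hent
  refine le_trans hb ?_
  have hn : (0:ℝ) ≤ (Fintype.card S : ℝ) := Nat.cast_nonneg _
  have ha : 0 ≤ α ^ 2 * Wmax := by positivity
  have hdiv : C ≤ α ^ 2 * Wmax / (1 - ρ) := by
    rw [hC_def, div_le_div_iff₀ h1ρsq (by linarith)]
    nlinarith [mul_nonneg (mul_nonneg ha hρ0.le) (sub_nonneg.mpr hρ1.le)]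
  calc (Fintype.card S : ℝ) * (C + M0 * ρ ^ (2 * k))
      = (Fintype.card S : ℝ) * C + (Fintype.card S : ℝ) * M0 * ρ ^ (2 * k) := by ring
    _ ≤ (Fintype.card S : ℝ) * (α ^ 2 * Wmax / (1 - ρ))
          + (Fintype.card S : ℝ) * M0 * ρ ^ (2 * k) :=
        add_le_add (mul_le_mul_of_nonneg_left hdiv hn) le_rfl
    _ = α ^ 2 * Wmax * (Fintype.card S : ℝ) / (1 - ρ)
          + (Fintype.card S : ℝ) * M0 * ρ ^ (2 * k) := by ring
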